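/- Fix integers n and k with 2 ≤ k ≤ n−2. Let ω₀ = 1, ω₁, …, ω_{k−1} be pairwise distinct complex numbers satisfying ω_a^n = 1 for every a = 0,…,k−1 and 1 + ω₁ + ⋯ + ω_{k−1} ≠ 0. For a k-tuple of integers c = (c₁, …, c_k), let M(c) be the k×k complex matrix with entries M(c)_{a,s} = ω_a^{c_s} (rows indexed by a = 0,…,k−1, columns by s = 1,…,k), and let p(c) = det M(c); for b ∈ {1,…,k−1} and i ∈ ℤ, let D_{b,i}(c) be the sum, over those column indices s with c_s ≡ i (mod n), of the determinant of the matrix obtained from M(c) by replacing its s-th column with the standard basis column vector having 1 in row b and 0 in all other rows. Then for every j ∈ {1,…,n} the numbers p(j, j+1, …, j+k−1) and p(j, j+1, …, j+k−2, j+k) are nonzero, and for every b ∈ {1,…,k−1} and every i ∈ ℤ one has Σ_{j=1}^{n} [ D_{b,i}(j, j+1, …, j+k−1) / p(j, j+1, …, j+k−1) − D_{b,i}(j, j+1, …, j+k−2, j+k) / p(j, j+1, …, j+k−2, j+k) ] = 0. -/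

import Mathlib

open Matrix Polynomial
set_option maxHeartbeats 1000000

private lemma count_lemma (n : ℕ) (hn : 0 < n) (e i : ℤ) (x : ℂ) :
    ∑ j ∈ Finset.Icc (1:ℕ) n, (if ((j:ℤ) + e) ≡ i [ZMOD (n:ℤ)] then x else 0) = x := by
  have hn' : (0:ℤ) < n := by exact_mod_cast hn
  set r : ℤ := (i - e - 1) % n with hr
  have hr0 : 0 ≤ r := Int.emod_nonneg _ hn'.ne'
  have hrn : r < n := Int.emod_lt_of_pos _ hn'
  have hj₀z : ((r.toNat + 1 : ℕ) : ℤ) = r + 1 := by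
    push_cast [Int.toNat_of_nonneg hr0]; ring
  have hfilt : Finset.filter (fun j : ℕ => ((j:ℤ) + e) ≡ i [ZMOD (n:ℤ)]) (Finset.Icc (1:ℕ) n)
      = {r.toNat + 1} := by
    ext j
    simp only [Finset.mem_filter, Finset.mem_Icc, Finset.mem_singleton]
    constructor
    · rintro ⟨⟨h1, h2⟩, hmod⟩
      have h3 : ((j:ℤ) - 1) ≡ (i - e - 1) [ZMOD (n:ℤ)] := by
        have h := hmod.sub_right (e+1)
        have e1 : (j:ℤ) + e - (e+1) = (j:ℤ) - 1 := by ring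
        have e2 : i - (e+1) = i - e - 1 := by ring
        rwa [e1, e2] at h
      have h4 : ((j:ℤ) - 1) % n = r := h3
      have h5 : ((j:ℤ) - 1) % n = (j:ℤ) - 1 :=
        Int.emod_eq_of_lt (by omega) (by omega)
      omega
    · rintro rfl
      refine ⟨⟨by omega, by omega⟩, ?_⟩
      show (((r.toNat + 1 : ℕ) : ℤ) + e) % n = i % n
      rw [hj₀z, hr]
      have h6 : (i - e - 1) % ↑n + 1 + e = (i - e - 1) % ↑n + (1 + e) := by ring
      rw [h6, Int.emod_add_emod]
      congr 1; ring
  rw [← Finset.sum_filter, hfilt, Finset.sum_singleton]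

private lemma det_gvand (k : ℕ) (hk : 1 ≤ k) (ω : Fin k → ℂ) :
    (Matrix.of fun a s : Fin k => ω a ^ (if (s:ℕ) = k - 1 then k else (s:ℕ))).det
      = (∑ a, ω a) * (Matrix.vandermonde ω).det := by
  set c : Fin k → ℂ := fun m => -(∏ a : Fin k, (X - C (ω a))).coeff m with hc
  have hmon : (∏ a : Fin k, (X - C (ω a))).Monic :=
    monic_prod_of_monic _ _ fun a _ => monic_X_sub_C _
  have hdeg : (∏ a : Fin k, (X - C (ω a))).natDegree = k := by
    rw [natDegree_prod]
    · simp [natDegree_X_sub_C]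
    · intro a _; exact X_sub_C_ne_zero _
  have hpow : ∀ a, ω a ^ k = ∑ m : Fin k, c m • Matrix.vandermonde ω a m := by
    intro a
    have hev : eval (ω a) (∏ b : Fin k, (X - C (ω b))) = 0 := by
      rw [eval_prod]
      exact Finset.prod_eq_zero (Finset.mem_univ a) (by simp)
    have hs := eval_eq_sum_range (p := ∏ b : Fin k, (X - C (ω b))) (ω a)
    rw [hdeg, Finset.sum_range_succ, hev] at hs
    have hck : (∏ b : Fin k, (X - C (ω b))).coeff k = 1 := by
      have h := hmon.coeff_natDegree; rwa [hdeg] at h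
    rw [hck, one_mul] at hs
    have hgoal : ∑ m : Fin k, c m • Matrix.vandermonde ω a m
        = -∑ m : Fin k, (∏ b : Fin k, (X - C (ω b))).coeff (m:ℕ) * ω a ^ (m:ℕ) := by
      rw [← Finset.sum_neg_distrib]
      apply Finset.sum_congr rfl
      intro m _
      simp [hc, Matrix.vandermonde_apply, smul_eq_mul]
    have h7 : ∑ m : Fin k, (∏ b : Fin k, (X - C (ω b))).coeff (m:ℕ) * ω a ^ (m:ℕ)
        = ∑ m ∈ Finset.range k, (∏ b : Fin k, (X - C (ω b))).coeff m * ω a ^ m :=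
      Fin.sum_univ_eq_sum_range (fun m => (∏ b : Fin k, (X - C (ω b))).coeff m * ω a ^ m) k
    rw [hgoal, h7]
    linear_combination -hs
  have hmat : (Matrix.of fun a s : Fin k => ω a ^ (if (s:ℕ) = k - 1 then k else (s:ℕ)))
      = (Matrix.vandermonde ω).updateCol ⟨k-1, by omega⟩
          (fun a => ∑ m : Fin k, c m • Matrix.vandermonde ω a m) := by
    ext a s
    rw [Matrix.updateCol_apply]
    by_cases h : s = ⟨k-1, by omega⟩
    · rw [if_pos h, ← hpow a]
      have hv : (s:ℕ) = k - 1 := by rw [h]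
      simp [hv]
    · rw [if_neg h]
      have hv : (s:ℕ) ≠ k-1 := fun hh => h (Fin.ext hh)
      simp [Matrix.vandermonde_apply, hv]
  rw [hmat, Matrix.det_updateCol_sum]
  have hco : (∏ a : Fin k, (X - C (ω a))).coeff (k-1) = -∑ a, ω a := by
    have h := prod_X_sub_C_coeff_card_pred (Finset.univ : Finset (Fin k)) ω
      (by simpa using (by omega : 0 < k))
    simpa using h
  simp [hc, hco, smul_eq_mul]
private lemma key (n k : ℕ) (hn : 0 < n) (ω : Fin k → ℂ) (hω : ∀ a, ω a ^ n = 1)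
    (d : Fin k → ℤ) (hW : (Matrix.of fun a s : Fin k => ω a ^ d s).det ≠ 0)
    (b : Fin k) (i : ℤ) (c : ℕ → Fin k → ℤ) (hc : ∀ j s, c j s = (j : ℤ) + d s) :
    ∑ j ∈ Finset.Icc (1:ℕ) n,
      ((∑ s ∈ Finset.univ.filter fun s => c j s ≡ i [ZMOD (n : ℤ)],
          (Matrix.updateCol (Matrix.of fun a t => ω a ^ c j t) s
            fun a => if a = b then 1 else 0).det) /
        (Matrix.of fun a t => ω a ^ c j t : Matrix (Fin k) (Fin k) ℂ).det) = ω b ^ (-i) := by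
  have hne : ∀ a, ω a ≠ 0 := fun a h => by
    have h2 := hω a; rw [h, zero_pow hn.ne'] at h2; exact zero_ne_one h2
  set W : Matrix (Fin k) (Fin k) ℂ := Matrix.of fun a s => ω a ^ d s with hWdef
  have hmul : ∀ t : ℤ, ω b ^ ((n:ℤ) * t) = 1 := by
    intro t
    rw [_root_.zpow_mul, zpow_natCast, hω b, _root_.one_zpow]
  have hfac : ∀ j : ℕ, (Matrix.of fun a t => ω a ^ ((j:ℤ) + d t) : Matrix (Fin k) (Fin k) ℂ)
      = Matrix.diagonal (fun a => ω a ^ (j:ℤ)) * W := by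
    intro j; ext a t
    rw [Matrix.diagonal_mul]
    simp only [Matrix.of_apply, hWdef]
    rw [zpow_add₀ (hne a)]
  have hdet : ∀ j : ℕ, (Matrix.diagonal (fun a => ω a ^ (j:ℤ)) * W).det ≠ 0 := by
    intro j
    rw [Matrix.det_mul, Matrix.det_diagonal]
    exact mul_ne_zero (Finset.prod_ne_zero_iff.2 fun a _ => zpow_ne_zero _ (hne a)) hW
  have hWinv : W * W⁻¹ = 1 := Matrix.mul_nonsing_inv W (isUnit_iff_ne_zero.mpr hW)
  have hinv : ∀ j : ℕ, ∀ s, ((Matrix.diagonal (fun a => ω a ^ (j:ℤ)) * W)⁻¹) s b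
      = W⁻¹ s b * ω b ^ (-(j:ℤ)) := by
    intro j s
    have hright : (Matrix.diagonal (fun a => ω a ^ (j:ℤ)) * W)
        * (W⁻¹ * Matrix.diagonal (fun a => ω a ^ (-(j:ℤ)))) = 1 := by
      calc (Matrix.diagonal (fun a => ω a ^ (j:ℤ)) * W)
            * (W⁻¹ * Matrix.diagonal (fun a => ω a ^ (-(j:ℤ))))
          = Matrix.diagonal (fun a => ω a ^ (j:ℤ)) * (W * W⁻¹)
            * Matrix.diagonal (fun a => ω a ^ (-(j:ℤ))) := by
            simp only [Matrix.mul_assoc]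
        _ = Matrix.diagonal (fun a => ω a ^ (j:ℤ))
            * Matrix.diagonal (fun a => ω a ^ (-(j:ℤ))) := by rw [hWinv, Matrix.mul_one]
        _ = Matrix.diagonal (fun a => ω a ^ (j:ℤ) * ω a ^ (-(j:ℤ))) := by
            rw [Matrix.diagonal_mul_diagonal]
        _ = 1 := by
            rw [show (fun a => ω a ^ (j:ℤ) * ω a ^ (-(j:ℤ))) = fun _ : Fin k => (1:ℂ) by
              funext a; rw [← zpow_add₀ (hne a)]; simp]
            exact Matrix.diagonal_one
    rw [Matrix.inv_eq_right_inv hright, Matrix.mul_diagonal]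
  have hterm : ∀ j ∈ Finset.Icc (1:ℕ) n,
      ((∑ s ∈ Finset.univ.filter fun s => c j s ≡ i [ZMOD (n : ℤ)],
          (Matrix.updateCol (Matrix.of fun a t => ω a ^ c j t) s
            fun a => if a = b then 1 else 0).det) /
        (Matrix.of fun a t => ω a ^ c j t : Matrix (Fin k) (Fin k) ℂ).det)
      = ∑ s : Fin k, (if ((j:ℤ) + d s) ≡ i [ZMOD (n:ℤ)]
          then W⁻¹ s b * ω b ^ (d s - i) else 0) := by
    intro j _
    simp only [hc]
    rw [hfac j, Finset.sum_div, Finset.sum_filter]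
    apply Finset.sum_congr rfl
    intro s _
    split_ifs with hcond
    · set A := Matrix.diagonal (fun a => ω a ^ (j:ℤ)) * W with hA
      have h1 : (fun a => if a = b then (1:ℂ) else 0) = Pi.single b 1 := by
        funext a; simp [Pi.single_apply]
      have h2 : (A.updateCol s (Pi.single b 1)).det = A.adjugate s b := by
        conv_lhs => rw [show A = Aᵀᵀ from (Matrix.transpose_transpose A).symm]
        rw [Matrix.updateCol_transpose, Matrix.det_transpose, ← Matrix.adjugate_apply,
          ← Matrix.adjugate_transpose, Matrix.transpose_apply]
      have h3 : A⁻¹ s b = A.adjugate s b / A.det := by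
        rw [Matrix.inv_def]
        simp [Ring.inverse_eq_inv', div_eq_inv_mul, Matrix.smul_apply, smul_eq_mul]
      have h4 : ω b ^ (-(j:ℤ)) = ω b ^ (d s - i) := by
        obtain ⟨m, hm⟩ := Int.ModEq.dvd hcond
        have he : d s - i = -(j:ℤ) + (n:ℤ) * (-m) := by linear_combination -hm
        rw [he, zpow_add₀ (hne b), hmul, mul_one]
      rw [h1, h2, ← h3, hinv j s, h4]
    · rfl
  rw [Finset.sum_congr rfl hterm, Finset.sum_comm]
  have hcnt : ∀ s : Fin k, ∑ j ∈ Finset.Icc (1:ℕ) n,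
      (if ((j:ℤ) + d s) ≡ i [ZMOD (n:ℤ)] then W⁻¹ s b * ω b ^ (d s - i) else 0)
      = W⁻¹ s b * ω b ^ (d s - i) := fun s => count_lemma n hn (d s) i _
  rw [Finset.sum_congr rfl fun s _ => hcnt s]
  have hone : ∑ s : Fin k, ω b ^ d s * W⁻¹ s b = 1 := by
    have h1 : W * W⁻¹ = 1 := Matrix.mul_nonsing_inv W (isUnit_iff_ne_zero.mpr hW)
    calc ∑ s : Fin k, ω b ^ d s * W⁻¹ s b = (W * W⁻¹) b b := by
          rw [Matrix.mul_apply]; rfl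
      _ = 1 := by rw [h1, Matrix.one_apply_eq]
  calc ∑ s : Fin k, W⁻¹ s b * ω b ^ (d s - i)
      = (∑ s : Fin k, ω b ^ d s * W⁻¹ s b) * ω b ^ (-i) := by
        rw [Finset.sum_mul]
        apply Finset.sum_congr rfl
        intro s _
        rw [sub_eq_add_neg, zpow_add₀ (hne b)]
        ring
    _ = ω b ^ (-i) := by rw [hone, one_mul]


/-- Cyclic fixed points (given by distinct n-th roots of unity with
nonvanishing sum) satisfy the planar kinematics scattering equations. -/
theorem stmt_0 (n k : ℕ) (hk : 2 ≤ k) (hkn : k + 2 ≤ n)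
    (ω : Fin k → ℂ) (hω0 : ω ⟨0, by omega⟩ = 1) (hdist : Function.Injective ω)
    (hroot : ∀ a, ω a ^ n = 1) (hsum : ∑ a, ω a ≠ 0) :
    let M : (Fin k → ℤ) → Matrix (Fin k) (Fin k) ℂ :=
      fun c => Matrix.of fun a s => ω a ^ c s
    let p : (Fin k → ℤ) → ℂ := fun c => (M c).det
    let D : Fin k → ℤ → (Fin k → ℤ) → ℂ := fun b i c =>
      ∑ s ∈ Finset.univ.filter fun s => c s ≡ i [ZMOD (n : ℤ)],
        (Matrix.updateCol (M c) s fun a => if a = b then 1 else 0).det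
    let c1 : ℕ → Fin k → ℤ := fun j s => (j : ℤ) + s.val
    let c2 : ℕ → Fin k → ℤ :=
      fun j s => if s.val = k - 1 then (j : ℤ) + k else (j : ℤ) + s.val
    (∀ j ∈ Finset.Icc 1 n, p (c1 j) ≠ 0 ∧ p (c2 j) ≠ 0) ∧
    (∀ b : Fin k, b.val ≠ 0 → ∀ i : ℤ,
      ∑ j ∈ Finset.Icc 1 n,
        (D b i (c1 j) / p (c1 j) - D b i (c2 j) / p (c2 j)) = 0) := by
  intro M p D c1 c2
  have hn : 0 < n := by omega
  have hne : ∀ a, ω a ≠ 0 := fun a h => by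
    have h2 := hroot a; rw [h, zero_pow hn.ne'] at h2; exact zero_ne_one h2
  have hV : (Matrix.vandermonde ω).det ≠ 0 := by
    rw [Matrix.det_vandermonde]
    refine Finset.prod_ne_zero_iff.mpr fun a _ => Finset.prod_ne_zero_iff.mpr fun j hj => ?_
    exact sub_ne_zero_of_ne fun h => (Finset.mem_Ioi.mp hj).ne' (hdist h)
  set d1 : Fin k → ℤ := fun s => (s.val : ℤ) with hd1
  set d2 : Fin k → ℤ := fun s => if s.val = k - 1 then (k:ℤ) else (s.val : ℤ) with hd2
  have hW1 : (Matrix.of fun a s : Fin k => ω a ^ d1 s).det ≠ 0 := by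
    have he : (Matrix.of fun a s : Fin k => ω a ^ d1 s) = Matrix.vandermonde ω := by
      ext a s; simp [hd1, Matrix.vandermonde_apply, zpow_natCast]
    rw [he]; exact hV
  have hW2 : (Matrix.of fun a s : Fin k => ω a ^ d2 s).det ≠ 0 := by
    have he : (Matrix.of fun a s : Fin k => ω a ^ d2 s)
        = Matrix.of fun a s : Fin k => ω a ^ (if (s:ℕ) = k - 1 then k else (s:ℕ)) := by
      ext a s
      by_cases h : (s:ℕ) = k - 1 <;> simp [hd2, h, zpow_natCast]
    rw [he, det_gvand k (by omega) ω]
    exact mul_ne_zero hsum hV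
  have hc1 : ∀ j (s : Fin k), c1 j s = (j:ℤ) + d1 s := fun j s => rfl
  have hc2 : ∀ j (s : Fin k), c2 j s = (j:ℤ) + d2 s := by
    intro j s
    simp only [c2, hd2]
    split <;> rfl
  have hfac : ∀ (dd : Fin k → ℤ) (j : ℕ),
      (Matrix.of fun a t => ω a ^ ((j:ℤ) + dd t) : Matrix (Fin k) (Fin k) ℂ)
      = Matrix.diagonal (fun a => ω a ^ (j:ℤ)) * Matrix.of fun a s => ω a ^ dd s := by
    intro dd j; ext a t
    rw [Matrix.diagonal_mul]; simp only [Matrix.of_apply]; rw [zpow_add₀ (hne a)]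
  have hdet : ∀ (dd : Fin k → ℤ), (Matrix.of fun a s : Fin k => ω a ^ dd s).det ≠ 0 →
      ∀ j : ℕ, (Matrix.of fun a t => ω a ^ ((j:ℤ) + dd t) : Matrix (Fin k) (Fin k) ℂ).det ≠ 0 := by
    intro dd hdd j
    rw [hfac dd j, Matrix.det_mul, Matrix.det_diagonal]
    exact mul_ne_zero (Finset.prod_ne_zero_iff.2 fun a _ => zpow_ne_zero _ (hne a)) hdd
  constructor
  · intro j _
    constructor
    · show (M (c1 j)).det ≠ 0
      have he : M (c1 j) = Matrix.of fun a t => ω a ^ ((j:ℤ) + d1 t) := by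
        ext a t; simp only [M, Matrix.of_apply, hc1]
      rw [he]; exact hdet d1 hW1 j
    · show (M (c2 j)).det ≠ 0
      have he : M (c2 j) = Matrix.of fun a t => ω a ^ ((j:ℤ) + d2 t) := by
        ext a t; simp only [M, Matrix.of_apply, hc2]
      rw [he]; exact hdet d2 hW2 j
  · intro b _ i
    have k1 := key n k hn ω hroot d1 hW1 b i c1 hc1
    have k2 := key n k hn ω hroot d2 hW2 b i c2 hc2
    rw [Finset.sum_sub_distrib]
    simp only [D, p, M]
    rw [k1, k2, sub_self]
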